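/- Suppose the triple (X, X(u), 𝒞) exhibits the cyclic sieving phenomenon, where 𝒞 = C_1 × ⋯ × C_m is a product of finite cyclic groups of odd total order |𝒞|, with injective characters ω_i : C_i → ℂ^×, and X(u) = Σ_{d ∈ ℤ^m} a_d u^d is a Laurent polynomial in u = (u_1,…,u_m) with nonnegative integer coefficients. Fix a nonnegative integer k, let (X choose k) denote the set of k-element subsets of X with the induced 𝒞-action, and define e_k[X(u)] as follows: with n = Σ_d a_d = |X|, choose a list (d^{(1)},…,d^{(n)}) of exponent vectors in which each d appears exactly a_d times, and set e_k[X(u)] = Σ_{1 ≤ i_1 < i_2 < ⋯ < i_k ≤ n} u^{d^{(i_1)} + d^{(i_2)} + ⋯ + d^{(i_k)}}. Then the triple ( (X choose k), e_k[X(u)], 𝒞 ) also exhibits the cyclic sieving phenomenon. -/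

import Mathlib

open Polynomial Finset

lemma aux_geom (n : ℕ) (u : ℂ) (hu : u ^ n = 1) :
    ∑ p ∈ Finset.range n, u ^ p = if u = 1 then (n : ℂ) else 0 := by
  split_ifs with h
  · simp [h]
  · rw [geom_sum_eq h, hu]
    simp

lemma aux_count (n : ℕ) (hn : n ≠ 0) (S : Multiset ℂ) (hS : ∀ w ∈ S, w ^ n = 1)
    (z : ℂ) (hz : z ^ n = 1) :
    ∑ p ∈ Finset.range n, (S.map (· ^ p)).sum * (z⁻¹) ^ p = (n : ℂ) * (S.count z) := by
  have hz0 : z ≠ 0 := by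
    intro h
    rw [h, zero_pow hn] at hz
    exact zero_ne_one hz
  induction S using Multiset.induction_on with
  | empty => simp
  | cons a S ih =>
      have ha : a ^ n = 1 := hS a (Multiset.mem_cons_self a S)
      have hS' : ∀ w ∈ S, w ^ n = 1 := fun w hw => hS w (Multiset.mem_cons_of_mem hw)
      simp only [Multiset.map_cons, Multiset.sum_cons, add_mul, Finset.sum_add_distrib,
        ih hS', Multiset.count_cons]
      have : ∀ p : ℕ, a ^ p * z⁻¹ ^ p = (a * z⁻¹) ^ p := fun p => (mul_pow _ _ _).symm
      simp only [this]
      rw [aux_geom n (a * z⁻¹) (by rw [mul_pow, ha, inv_pow, hz]; simp)]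
      have : (a * z⁻¹ = 1) ↔ (a = z) := by
        rw [mul_inv_eq_one₀ hz0]
      rw [if_congr this rfl rfl]
      by_cases h : a = z
      · subst h; rw [if_pos rfl, if_pos rfl]; push_cast; ring
      · rw [if_neg h, if_neg (fun hh => h hh.symm)]; push_cast; ring

lemma aux_sum_pow_nthRoots (ℓ p : ℕ) (hℓ : ℓ ≠ 0) :
    ((Polynomial.nthRoots ℓ (1:ℂ)).map (· ^ p)).sum = if ℓ ∣ p then (ℓ : ℂ) else 0 := by
  obtain ⟨ζ, hζ⟩ : ∃ ζ : ℂ, IsPrimitiveRoot ζ ℓ := ⟨_, Complex.isPrimitiveRoot_exp ℓ hℓ⟩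
  rw [hζ.nthRoots_eq (one_pow ℓ), Multiset.map_map]
  have h1 : ∀ t : ℕ, ((ζ ^ t * 1) ^ p) = (ζ ^ p) ^ t := by
    intro t; rw [mul_one, ← pow_mul, ← pow_mul, mul_comm]
  simp only [Function.comp, h1]
  rw [show (Multiset.range ℓ) = (Finset.range ℓ).val from rfl, ← Finset.sum_eq_multiset_sum]
  rw [aux_geom ℓ (ζ ^ p) (by rw [← pow_mul, mul_comm, pow_mul, hζ.pow_eq_one, one_pow])]
  exact if_congr (hζ.pow_eq_one_iff_dvd p) rfl rfl

lemma aux_X_pow_add_one (ℓ : ℕ) (ho : Odd ℓ) :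
    (Polynomial.X : ℂ[X]) ^ ℓ + 1
      = ((Polynomial.nthRoots ℓ (1:ℂ)).map (fun r => Polynomial.X + Polynomial.C r)).prod := by
  have hℓ : ℓ ≠ 0 := by rintro rfl; simp at ho
  have hmonic : (X ^ ℓ - C (1:ℂ)).Monic := monic_X_pow_sub_C _ hℓ
  have hsplit : (X ^ ℓ - C (1:ℂ)).Splits := IsAlgClosed.splits _
  have hfac : X ^ ℓ - C (1:ℂ) = ((nthRoots ℓ (1:ℂ)).map (fun r => X - C r)).prod := by
    have := hsplit.eq_prod_roots_of_monic hmonic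
    rwa [← nthRoots] at this
  have hcard : Multiset.card (nthRoots ℓ (1:ℂ)) = ℓ :=
    (Complex.isPrimitiveRoot_exp ℓ hℓ).card_nthRoots_one
  have hcomp := congrArg (fun p : ℂ[X] => p.comp (-X)) hfac
  simp only [sub_comp, pow_comp, X_comp, C_comp, multiset_prod_comp, Multiset.map_map,
    Function.comp] at hcomp
  rw [ho.neg_pow] at hcomp
  have h2 : ∀ r : ℂ, -X - C r = -(X + C r) := fun r => by ring
  simp only [h2] at hcomp
  have h3 : (Multiset.map (fun r => -(X + C r)) (nthRoots ℓ (1:ℂ))).prod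
      = (-1) ^ ℓ * ((nthRoots ℓ (1:ℂ)).map (fun r => X + C r)).prod := by
    rw [show (fun r : ℂ => -(X + C r)) = (Neg.neg ∘ fun r : ℂ => X + C r) from rfl,
      ← Multiset.map_map, Multiset.prod_map_neg, Multiset.card_map, hcard]
  rw [h3, ho.neg_one_pow] at hcomp
  have := congrArg (fun p : ℂ[X] => -p) hcomp
  simp only [neg_sub, neg_neg, one_mul, neg_mul, map_one] at this
  rw [← this]
  ring

lemma aux_map_finsum {α β γ : Type*} (u : Finset γ) (S : γ → Multiset α) (f : α → β) :
    ((∑ o ∈ u, S o).map f) = ∑ o ∈ u, (S o).map f :=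
  map_sum (Multiset.mapAddMonoidHom f) S u

lemma aux_card_finsum {α γ : Type*} (u : Finset γ) (S : γ → Multiset α) :
    Multiset.card (∑ o ∈ u, S o) = ∑ o ∈ u, Multiset.card (S o) := by
  induction u using Finset.cons_induction with
  | empty => simp
  | cons a u ha ih => simp [Finset.sum_cons, ih]

lemma aux_sum_finsum {α γ : Type*} [AddCommMonoid α] (u : Finset γ) (S : γ → Multiset α) :
    (∑ o ∈ u, S o).sum = ∑ o ∈ u, (S o).sum := by
  induction u using Finset.cons_induction with
  | empty => simp
  | cons a u ha ih => simp [Finset.sum_cons, ih]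

lemma aux_prod_finsum {α γ : Type*} [CommMonoid α] (u : Finset γ) (S : γ → Multiset α) :
    (∑ o ∈ u, S o).prod = ∏ o ∈ u, (S o).prod := by
  induction u using Finset.cons_induction with
  | empty => simp
  | cons a u ha ih => simp [Finset.sum_cons, ih]

lemma aux_zpow_sum {G : Type*} [CommGroup G] (x : G) {γ : Type*} (s : Finset γ) (f : γ → ℤ) :
    x ^ (∑ j ∈ s, f j) = ∏ j ∈ s, x ^ f j := by
  induction s using Finset.cons_induction with
  | empty => simp
  | cons a s ha ih => rw [Finset.sum_cons, Finset.prod_cons, zpow_add, ih]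


/-- **Proposition (exterior power construction).**
Suppose the triple `(X, X(u), 𝒞)` exhibits the CSP, where `𝒞 = C₁ × ⋯ × C_m`
is a product of finite cyclic groups of **odd** total order, with injective
characters `ωᵢ`, and `X(u) = Σ_d a_d u^d` is a Laurent polynomial with
nonnegative integer coefficients.  Choose a list `D : Fin N → ℤ^m` of exponent
vectors in which each `d` occurs exactly `a_d` times (so `N = Σ_d a_d = |X|`);
then `e_k[X(u)] = Σ_{1 ≤ i₁ < ⋯ < i_k ≤ N} u^{D(i₁)+⋯+D(i_k)}`, a sum indexed
by the `k`-element subsets of `Fin N`.  Then the triple consisting of the set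
of `k`-element subsets of `X` (with the induced action), `e_k[X(u)]`, and `𝒞`,
also exhibits the CSP. -/
theorem subsets_CSP (m : ℕ) (C : Fin m → Type)
    [∀ i, Group (C i)] [∀ i, Fintype (C i)] (hcyc : ∀ i, IsCyclic (C i))
    (hodd : Odd (Nat.card (∀ i, C i)))
    (X : Type) [Fintype X] [DecidableEq X] [MulAction (∀ i, C i) X]
    (ω : ∀ i, C i →* ℂˣ) (hω : ∀ i, Function.Injective (ω i))
    (a : (Fin m → ℤ) →₀ ℕ) (N : ℕ) (hN : Nat.card X = N)
    (D : Fin N → (Fin m → ℤ))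
    (hD : ∀ d, (Finset.univ.filter (fun j => D j = d)).card = a d)
    (hCSP : ∀ c : ∀ i, C i,
      (Nat.card {x : X | c • x = x} : ℂ) =
      ∑ d ∈ a.support, (a d : ℂ) * ∏ i, ((ω i (c i) : ℂ) ^ (d i)))
    (k : ℕ) :
    ∀ c : ∀ i, C i,
      (Nat.card {s : Finset X | s.card = k ∧
          s.image (fun x => c • x) = s} : ℂ) =
      ∑ s ∈ Finset.powersetCard k (Finset.univ : Finset (Fin N)), ∏ i,
        ((ω i (c i) : ℂ) ^ (∑ j ∈ s, D j i)) := by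
  intro c
  classical
  set n := Nat.card (∀ i, C i) with hn_def
  have hn0 : n ≠ 0 := Nat.card_pos.ne'
  have hcn : c ^ n = 1 := pow_card_eq_one'
  -- the unit values
  set w : Fin m → ℂˣ := fun i => ω i (c i) with hw_def
  have hwn : ∀ i, w i ^ n = 1 := by
    intro i
    have h1 : (c i) ^ n = 1 := by
      have := congrFun hcn i
      simpa using this
    show (ω i (c i)) ^ n = 1
    rw [← map_pow, h1, map_one]
  set v : Fin N → ℂ := fun j => ∏ i, ((w i : ℂ)) ^ (D j i) with hv_def
  have hw0 : ∀ i, (w i : ℂ) ≠ 0 := fun i => Units.ne_zero _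
  -- power sums of v expressed via the CSP hypothesis
  have himg : Finset.univ.image D = a.support := by
    ext d
    simp only [Finset.mem_image, Finsupp.mem_support_iff]
    constructor
    · rintro ⟨j, -, rfl⟩
      rw [← hD (D j)]
      exact Finset.card_ne_zero_of_mem (Finset.mem_filter.mpr ⟨Finset.mem_univ j, rfl⟩)
    · intro hd
      rw [← hD d] at hd
      obtain ⟨j, hj⟩ := Finset.card_ne_zero.mp hd
      exact ⟨j, Finset.mem_univ j, (Finset.mem_filter.mp hj).2⟩
  have hgroup : ∀ f : (Fin m → ℤ) → ℂ, ∑ j, f (D j) = ∑ d ∈ a.support, (a d : ℂ) * f d := by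
    intro f
    rw [Finset.sum_comp, himg]
    refine Finset.sum_congr rfl fun d _ => ?_
    rw [hD d, nsmul_eq_mul]
  have hvpow : ∀ (p : ℕ) (j : Fin N),
      v j ^ p = ∏ i, ((ω i ((c ^ p) i) : ℂ)) ^ (D j i) := by
    intro p j
    rw [hv_def]
    rw [← Finset.prod_pow]
    refine Finset.prod_congr rfl fun i _ => ?_
    have h1 : ((c ^ p) i) = (c i) ^ p := by simp [Pi.pow_apply]
    rw [h1, map_pow]
    rw [← Units.val_zpow_eq_zpow_val, ← Units.val_pow_eq_pow_val, ← Units.val_zpow_eq_zpow_val]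
    congr 1
    rw [← zpow_natCast (w i ^ D j i) p, ← zpow_mul, ← zpow_natCast (w i) p, ← zpow_mul, mul_comm]
  have hps0 : ∀ p : ℕ, ∑ j, v j ^ p = (Nat.card {x : X | c ^ p • x = x} : ℂ) := by
    intro p
    rw [hCSP (c ^ p)]
    rw [← hgroup (fun d => ∏ i, ((ω i ((c ^ p) i) : ℂ)) ^ (d i))]
    exact Finset.sum_congr rfl fun j _ => hvpow p j
  -- orbit structure
  set H := Subgroup.zpowers c with hH_def
  let Ω := MulAction.orbitRel.Quotient H X
  haveI : Fintype Ω := Fintype.ofFinite _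
  let q : X → Ω := Quotient.mk''
  have hq : ∀ x y : X, q x = q y ↔ x ∈ MulAction.orbit H y := by
    intro x y
    rw [Quotient.eq'']
    exact MulAction.orbitRel_apply
  let ℓ : Ω → ℕ := fun o => (Finset.univ.filter fun x => q x = o).card
  have hper : ∀ x : X, ℓ (q x) = MulAction.period c x := by
    intro x
    have h1 : ∀ y, (q y = q x) ↔ y ∈ MulAction.orbit H x := fun y => hq y x
    calc ℓ (q x) = Fintype.card {y : X // q y = q x} := (Fintype.card_subtype _).symm
      _ = Nat.card {y : X // q y = q x} := Nat.card_eq_fintype_card.symm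
      _ = Nat.card (MulAction.orbit H x) := Nat.card_congr (Equiv.subtypeEquivRight h1)
      _ = Fintype.card (MulAction.orbit H x) := Nat.card_eq_fintype_card
      _ = MulAction.period c x := by
          rw [MulAction.period_eq_minimalPeriod, MulAction.minimalPeriod_eq_card]
  have hfix : ∀ (p : ℕ) (x : X), c ^ p • x = x ↔ ℓ (q x) ∣ p := by
    intro p x
    rw [hper x]
    exact MulAction.pow_smul_eq_iff_period_dvd
  have hsurj : ∀ o : Ω, ∃ x : X, q x = o := fun o => ⟨o.out, Quotient.out_eq' o⟩
  have hl0 : ∀ o : Ω, ℓ o ≠ 0 := by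
    intro o
    obtain ⟨x, rfl⟩ := hsurj o
    exact Finset.card_ne_zero_of_mem (Finset.mem_filter.mpr ⟨Finset.mem_univ x, rfl⟩)
  have hldvd : ∀ o : Ω, ℓ o ∣ n := by
    intro o
    obtain ⟨x, rfl⟩ := hsurj o
    rw [hper x]
    exact (MulAction.period_dvd_orderOf c x).trans (orderOf_dvd_natCard c)
  have hlodd : ∀ o : Ω, Odd (ℓ o) := fun o => hodd.of_dvd_nat (hldvd o)
  have hsuml : ∑ o : Ω, ℓ o = N := by
    rw [← hN, Nat.card_eq_fintype_card, ← Finset.card_univ,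
      Finset.card_eq_sum_card_fiberwise (f := q) (t := Finset.univ)
        (fun x _ => Finset.mem_univ _)]
  have hfixcard : ∀ p : ℕ, Nat.card {x : X | c ^ p • x = x}
      = ∑ o : Ω, if ℓ o ∣ p then ℓ o else 0 := by
    intro p
    have h1 : Nat.card {x : X | c ^ p • x = x}
        = (Finset.univ.filter fun x : X => c ^ p • x = x).card := by
      rw [Nat.card_eq_fintype_card]
      exact Fintype.card_subtype _
    rw [h1]
    have h2 : (Finset.univ.filter fun x : X => c ^ p • x = x)
        = Finset.univ.filter fun x : X => ℓ (q x) ∣ p :=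
      Finset.filter_congr fun x _ => by rw [hfix p x]
    rw [h2]
    rw [Finset.card_eq_sum_card_fiberwise (f := q)
      (t := Finset.univ.filter fun o : Ω => ℓ o ∣ p)
      (fun x hx => by
        simp only [Finset.coe_filter, Finset.mem_coe, Set.mem_setOf_eq, Finset.mem_filter, Finset.mem_univ, true_and] at hx ⊢
        exact hx)]
    rw [Finset.sum_filter]
    refine Finset.sum_congr rfl fun o _ => ?_
    by_cases ho : ℓ o ∣ p
    · rw [if_pos ho, if_pos ho]
      have heq : (Finset.univ.filter fun x : X => ℓ (q x) ∣ p).filter (fun x => q x = o)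
          = Finset.univ.filter fun x => q x = o := by
        ext x
        simp only [Finset.mem_filter, Finset.mem_univ, true_and]
        exact ⟨fun h => h.2, fun h => ⟨h ▸ ho, h⟩⟩
      rw [heq]
    · rw [if_neg ho, if_neg ho]
  -- invariant subsets are unions of orbits
  have hsmul_inj : Function.Injective (fun x : X => c • x) := MulAction.injective c
  have hstep : ∀ s : Finset X, Finset.image (fun x => c • x) s = s → ∀ z ∈ s, c • z ∈ s := by
    intro s hs z hz
    rw [← hs]
    exact Finset.mem_image_of_mem _ hz
  have hinv : ∀ s : Finset X, Finset.image (fun x => c • x) s = s →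
      ∀ y ∈ s, ∀ x : X, q x = q y → x ∈ s := by
    intro s hs y hy x hxy
    rw [hq] at hxy
    obtain ⟨g, hg⟩ := hxy
    obtain ⟨t, ht⟩ := (Submonoid.mem_powers_iff _ _).mp (mem_powers_iff_mem_zpowers.mpr g.2)
    have hall : ∀ t : ℕ, c ^ t • y ∈ s := by
      intro t
      induction t with
      | zero => simpa using hy
      | succ t ih =>
          rw [pow_succ']
          rw [mul_smul]
          exact hstep s hs _ ih
    have hx := hall t
    rw [ht] at hx
    rwa [← hg]
  have hfiber_card : ∀ s : Finset X, Finset.image (fun x => c • x) s = s →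
      s.card = ∑ o ∈ s.image q, ℓ o := by
    intro s hs
    rw [Finset.card_eq_sum_card_fiberwise (f := q) (t := s.image q)
      (fun x hx => Finset.mem_image_of_mem q hx)]
    refine Finset.sum_congr rfl fun o ho => ?_
    obtain ⟨y, hy, rfl⟩ := Finset.mem_image.mp ho
    have heq : s.filter (fun x => q x = q y) = Finset.univ.filter (fun x => q x = q y) := by
      ext x
      simp only [Finset.mem_filter, Finset.mem_univ, true_and]
      exact ⟨fun h => h.2, fun h => ⟨hinv s hs y hy x h, h⟩⟩
    rw [heq]
  have hTcard : ∀ T : Finset Ω, (Finset.univ.filter fun x : X => q x ∈ T).card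
      = ∑ o ∈ T, ℓ o := by
    intro T
    rw [Finset.card_eq_sum_card_fiberwise (f := q) (t := T)
      (s := Finset.univ.filter fun x : X => q x ∈ T)
      (fun x hx => Finset.mem_coe.mpr (Finset.mem_filter.mp (Finset.mem_coe.mp hx)).2)]
    refine Finset.sum_congr rfl fun o ho => ?_
    have heq : (Finset.univ.filter fun x : X => q x ∈ T).filter (fun x => q x = o)
        = Finset.univ.filter fun x => q x = o := by
      ext x
      simp only [Finset.mem_filter, Finset.mem_univ, true_and]
      exact ⟨fun h => h.2, fun h => ⟨h ▸ ho, h⟩⟩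
    rw [heq]
  have hqc : ∀ x : X, q (c • x) = q x := by
    intro x
    rw [hq]
    exact ⟨⟨c, Subgroup.mem_zpowers c⟩, rfl⟩
  have hTinv : ∀ T : Finset Ω,
      Finset.image (fun x => c • x) (Finset.univ.filter fun x : X => q x ∈ T)
        = Finset.univ.filter fun x : X => q x ∈ T := by
    intro T
    refine Finset.eq_of_subset_of_card_le ?_ ?_
    · intro y hy
      obtain ⟨x, hx, rfl⟩ := Finset.mem_image.mp hy
      simp only [Finset.mem_filter, Finset.mem_univ, true_and] at hx ⊢
      rw [hqc x]
      exact hx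
    · rw [Finset.card_image_of_injective _ hsmul_inj]
  let e : {s : Finset X // s.card = k ∧ Finset.image (fun x => c • x) s = s}
      ≃ {T : Finset Ω // ∑ o ∈ T, ℓ o = k} :=
    { toFun := fun s => ⟨s.1.image q, by
        obtain ⟨s, hcard, hs⟩ := s
        dsimp only
        rw [← hfiber_card s hs, hcard]⟩
      invFun := fun T => ⟨Finset.univ.filter fun x : X => q x ∈ T.1, by
        refine ⟨?_, hTinv T.1⟩
        rw [hTcard T.1, T.2]⟩
      left_inv := by
        rintro ⟨s, hcard, hs⟩
        apply Subtype.ext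
        dsimp only
        ext x
        simp only [Finset.mem_filter, Finset.mem_univ, true_and, Finset.mem_image]
        constructor
        · rintro ⟨y, hy, hxy⟩
          exact hinv s hs y hy x hxy.symm
        · intro hx
          exact ⟨x, hx, rfl⟩
      right_inv := by
        rintro ⟨T, hT⟩
        apply Subtype.ext
        dsimp only
        ext o
        simp only [Finset.mem_image, Finset.mem_filter, Finset.mem_univ, true_and]
        constructor
        · rintro ⟨x, hx, rfl⟩
          exact hx
        · intro ho
          obtain ⟨x, rfl⟩ := hsurj o
          exact ⟨x, ho, rfl⟩ }
  have hcountA : Nat.card {s : Finset X | s.card = k ∧ Finset.image (fun x => c • x) s = s}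
      = (Finset.univ.filter fun T : Finset Ω => ∑ o ∈ T, ℓ o = k).card := by
    have h0 : Nat.card {s : Finset X | s.card = k ∧ Finset.image (fun x => c • x) s = s}
        = Nat.card {T : Finset Ω // ∑ o ∈ T, ℓ o = k} := Nat.card_congr e
    rw [h0, Nat.card_eq_fintype_card]
    exact Fintype.card_subtype _
  -- the multisets
  set V : Multiset ℂ := Finset.univ.val.map v with hV_def
  set W : Multiset ℂ := ∑ o : Ω, Polynomial.nthRoots (ℓ o) (1:ℂ) with hW_def
  have hVcard : Multiset.card V = N := by simp [hV_def]
  have hWcard : Multiset.card W = N := by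
    rw [hW_def, aux_card_finsum, ← hsuml]
    exact Finset.sum_congr rfl fun o _ =>
      (Complex.isPrimitiveRoot_exp _ (hl0 o)).card_nthRoots_one
  have hVmem : ∀ z ∈ V, z ^ n = 1 := by
    intro z hz
    rw [hV_def] at hz
    obtain ⟨j, _, rfl⟩ := Multiset.mem_map.mp hz
    rw [hv_def]
    rw [← Finset.prod_pow]
    apply Finset.prod_eq_one
    intro i _
    rw [← Units.val_zpow_eq_zpow_val, ← Units.val_pow_eq_pow_val]
    have h2 : (w i ^ D j i) ^ n = 1 := by
      rw [← zpow_natCast (w i ^ D j i) n, ← zpow_mul, mul_comm, zpow_mul, zpow_natCast,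
        hwn i, one_zpow]
    rw [h2, Units.val_one]
  have hWmem : ∀ z ∈ W, z ^ n = 1 := by
    intro z hz
    rw [hW_def] at hz
    rw [Multiset.mem_sum] at hz
    obtain ⟨o, _, ho⟩ := hz
    have hzl : z ^ (ℓ o) = 1 :=
      (Polynomial.mem_nthRoots (Nat.pos_of_ne_zero (hl0 o))).mp ho
    obtain ⟨t, ht⟩ := hldvd o
    rw [ht, pow_mul, hzl, one_pow]
  have hWps : ∀ p : ℕ, (W.map (· ^ p)).sum = ∑ o : Ω, if ℓ o ∣ p then (ℓ o : ℂ) else 0 := by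
    intro p
    rw [hW_def, aux_map_finsum, aux_sum_finsum]
    exact Finset.sum_congr rfl fun o _ => aux_sum_pow_nthRoots (ℓ o) p (hl0 o)
  have hVps : ∀ p : ℕ, (V.map (· ^ p)).sum = ∑ j, v j ^ p := by
    intro p
    rw [hV_def, Multiset.map_map]
    rfl
  have hps : ∀ p : ℕ, (V.map (· ^ p)).sum = (W.map (· ^ p)).sum := by
    intro p
    rw [hVps, hWps, hps0 p, hfixcard p]
    rw [Nat.cast_sum]
    refine Finset.sum_congr rfl fun o _ => ?_
    split_ifs <;> simp
  have hVW : V = W := by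
    refine Multiset.ext.mpr fun z => ?_
    by_cases hz : z ^ n = 1
    · have h1 := aux_count n hn0 V hVmem z hz
      have h2 := aux_count n hn0 W hWmem z hz
      have h3 : ((n:ℂ)) * (V.count z) = ((n:ℂ)) * (W.count z) := by
        rw [← h1, ← h2]
        exact Finset.sum_congr rfl fun p _ => by rw [hps p]
      have hnC : (n:ℂ) ≠ 0 := Nat.cast_ne_zero.mpr hn0
      exact_mod_cast mul_left_cancel₀ hnC h3
    · rw [Multiset.count_eq_zero_of_notMem fun hmem => hz (hVmem z hmem),
        Multiset.count_eq_zero_of_notMem fun hmem => hz (hWmem z hmem)]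
  have hRHS : ∑ s ∈ Finset.powersetCard k (Finset.univ : Finset (Fin N)), ∏ i,
      ((ω i (c i) : ℂ) ^ (∑ j ∈ s, D j i)) = Multiset.esymm V k := by
    rw [hV_def, Finset.esymm_map_val]
    refine Finset.sum_congr rfl fun s hs => ?_
    have h1 : ∀ i : Fin m, ((ω i (c i) : ℂ)) ^ (∑ j ∈ s, D j i)
        = ∏ j ∈ s, ((w i : ℂ)) ^ D j i := by
      intro i
      rw [show ((ω i (c i) : ℂ)) = ((w i : ℂ)) from rfl]
      rw [← Units.val_zpow_eq_zpow_val, aux_zpow_sum]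
      rw [show ((∏ j ∈ s, w i ^ D j i : ℂˣ) : ℂ) = ∏ j ∈ s, ((w i ^ D j i : ℂˣ) : ℂ) from
        map_prod (Units.coeHom ℂ) _ _]
      exact Finset.prod_congr rfl fun j _ => Units.val_zpow_eq_zpow_val _ _
    calc ∏ i, ((ω i (c i) : ℂ)) ^ (∑ j ∈ s, D j i)
        = ∏ i, ∏ j ∈ s, ((w i : ℂ)) ^ D j i := Finset.prod_congr rfl fun i _ => h1 i
      _ = ∏ j ∈ s, ∏ i, ((w i : ℂ)) ^ D j i := Finset.prod_comm
      _ = s.prod v := rfl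
  by_cases hk : k ≤ N
  · have hcoeff : Multiset.esymm W k
        = ((Finset.univ.filter fun T : Finset Ω => ∑ o ∈ T, ℓ o = k).card : ℂ) := by
      have h1 : Multiset.esymm W k
          = ((W.map (fun r => Polynomial.X + Polynomial.C r)).prod).coeff (N - k) := by
        have h0 := Multiset.prod_X_add_C_coeff W
          (show N - k ≤ Multiset.card W by rw [hWcard]; omega)
        rw [hWcard] at h0
        have h2 : N - (N - k) = k := by omega
        rw [h2] at h0
        exact h0.symm
      have h3 : (W.map (fun r => Polynomial.X + Polynomial.C r)).prod
          = ∏ o : Ω, ((Polynomial.X : Polynomial ℂ) ^ (ℓ o) + 1) := by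
        rw [hW_def, aux_map_finsum, aux_prod_finsum]
        exact Finset.prod_congr rfl fun o _ => (aux_X_pow_add_one (ℓ o) (hlodd o)).symm
      rw [h1, h3, Finset.prod_add]
      simp only [Finset.prod_const_one, mul_one, Finset.prod_pow_eq_pow_sum]
      rw [Polynomial.finset_sum_coeff]
      simp only [Polynomial.coeff_X_pow]
      rw [Finset.sum_boole, Finset.powerset_univ]
      norm_cast
      apply Finset.card_nbij' (i := fun T => Tᶜ) (j := fun T => Tᶜ)
      · intro T hT
        simp only [Finset.coe_filter, Set.mem_setOf_eq, Finset.mem_filter, Finset.mem_univ, true_and] at hT ⊢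
        have hc := Finset.sum_add_sum_compl T ℓ
        rw [hsuml] at hc
        omega
      · intro T hT
        simp only [Finset.coe_filter, Set.mem_setOf_eq, Finset.mem_filter, Finset.mem_univ, true_and] at hT ⊢
        have hc := Finset.sum_add_sum_compl T ℓ
        rw [hsuml] at hc
        omega
      · intro T _
        exact compl_compl T
      · intro T _
        exact compl_compl T
    rw [hcountA, hRHS, hVW, hcoeff]
  · have h1 : {s : Finset X | s.card = k ∧ Finset.image (fun x => c • x) s = s} = ∅ := by
      ext s
      simp only [Set.mem_setOf_eq, Set.mem_empty_iff_false, iff_false, not_and]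
      intro hcard
      exfalso
      have : s.card ≤ N := by
        rw [← hN, Nat.card_eq_fintype_card]
        exact Finset.card_le_univ s
      omega
    have h2 : Finset.powersetCard k (Finset.univ : Finset (Fin N)) = ∅ := by
      rw [Finset.powersetCard_eq_empty]
      simp only [Finset.card_univ, Fintype.card_fin]
      omega
    rw [h1, h2]
    simp
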